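/- Let C be a finite multiset of positive integers with gcd equal to 1 and |C| ≥ 2. Then the coefficient of x^n in Π_{c∈C} 1/(1−x^c) equals (Π_{c∈C} 1/c)·binom(n, |C|−1) + O(n^{|C|−2}), i.e., there is a constant K depending only on C such that |[x^n]Π_{c∈C}1/(1−x^c) − (Π_{c∈C}1/c)·n^{|C|−1}/(|C|−1)!| ≤ K·(n+1)^{|C|−2} for all n ≥ 0. -/

import Mathlib

open PowerSeries Polynomial Finset

lemma invA (c : ℕ) (hc : 0 < c) :
    (PowerSeries.mk fun m => if c ∣ m then (1:ℚ) else 0) * (1 - PowerSeries.X ^ c) = 1 := by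
  ext n
  rw [mul_sub, mul_one, map_sub, PowerSeries.coeff_mul_X_pow', PowerSeries.coeff_one,
    PowerSeries.coeff_mk]
  rcases n.eq_zero_or_pos with rfl | hn
  · simp only [Nat.dvd_zero, if_true, if_pos rfl]
    rw [if_neg (by omega), sub_zero]
  · rw [if_neg hn.ne', PowerSeries.coeff_mk]
    by_cases h : c ≤ n
    · rw [if_pos h]
      have : c ∣ n ↔ c ∣ n - c := by
        constructor
        · exact fun hd => Nat.dvd_sub hd dvd_rfl
        · intro hd2
          have := Nat.sub_add_cancel h
          rw [← this]; exact Nat.dvd_add hd2 dvd_rfl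
      by_cases hd : c ∣ n
      · rw [if_pos hd, if_pos (this.mp hd), sub_self]
      · rw [if_neg hd, if_neg (fun h2 => hd (this.mpr h2)), sub_self]
    · rw [if_neg h, sub_zero, if_neg (fun hd => h (Nat.le_of_dvd hn hd))]
noncomputable def U (L j : ℕ) : PowerSeries ℚ :=
  PowerSeries.mk fun m => if L ∣ m then (Nat.choose (m / L + j) j : ℚ) else 0

lemma U_mul (L : ℕ) (hL : 0 < L) (j : ℕ) :
    U L (j+1) * (1 - PowerSeries.X ^ L) = U L j := by
  ext n
  rw [mul_sub, mul_one, map_sub, PowerSeries.coeff_mul_X_pow']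
  simp only [U, PowerSeries.coeff_mk]
  by_cases h : L ≤ n
  · rw [if_pos h]
    have hiff : L ∣ n ↔ L ∣ n - L := by
      constructor
      · exact fun hd => Nat.dvd_sub hd dvd_rfl
      · intro hd2; rw [← Nat.sub_add_cancel h]; exact Nat.dvd_add hd2 dvd_rfl
    by_cases hd : L ∣ n
    · rw [if_pos hd, if_pos (hiff.mp hd), if_pos hd]
      have h1 : (n - L) / L = n / L - 1 := by
        obtain ⟨t, rfl⟩ := hd
        have h2 : L * t - L = L * (t - 1) := by
          rcases t with _ | t
          · omega
          · rw [Nat.mul_succ, Nat.add_sub_cancel, Nat.succ_sub_one]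
        rw [h2, Nat.mul_div_cancel_left _ hL, Nat.mul_div_cancel_left _ hL]
      have ht : 1 ≤ n / L := (Nat.one_le_div_iff hL).mpr h
      obtain ⟨s, hs⟩ : ∃ s, n / L = s + 1 := ⟨n / L - 1, by omega⟩
      rw [h1, hs]
      have e0 : s + 1 - 1 = s := rfl
      rw [e0]
      have e1 : s + 1 + (j + 1) = s + j + 1 + 1 := by ring
      have e2 : s + (j + 1) = s + j + 1 := by ring
      have e3 : s + 1 + j = s + j + 1 := by ring
      rw [e1, e2, e3, Nat.choose_succ_succ (s + j + 1) j]
      push_cast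
      ring
    · rw [if_neg hd, if_neg (fun h2 => hd (hiff.mpr h2)), if_neg hd, sub_zero]
  · rw [if_neg h, sub_zero]
    rcases n.eq_zero_or_pos with rfl | hn
    · simp
    · rw [if_neg (fun hd => h (Nat.le_of_dvd hn hd)), if_neg (fun hd => h (Nat.le_of_dvd hn hd))]

lemma U_inv (L : ℕ) (hL : 0 < L) (j : ℕ) :
    U L j * (1 - PowerSeries.X ^ L) ^ (j+1) = 1 := by
  induction j with
  | zero =>
    rw [pow_one]
    have h : U L 0 = PowerSeries.mk fun m => if L ∣ m then (1:ℚ) else 0 := by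
      ext n; simp [U]
    rw [h]
    exact invA L hL
  | succ j ih =>
    calc U L (j+1) * (1 - PowerSeries.X ^ L) ^ (j+1+1)
        = (U L (j+1) * (1 - PowerSeries.X ^ L)) * (1 - PowerSeries.X ^ L) ^ (j+1) := by ring
      _ = U L j * (1 - PowerSeries.X ^ L) ^ (j+1) := by rw [U_mul L hL j]
      _ = 1 := ih
noncomputable def geo (L c : ℕ) : Polynomial ℚ :=
  ∑ i ∈ Finset.range (L / c), Polynomial.X ^ (c * i)

lemma geo_mul (L c : ℕ) (hc : c ∣ L) :
    (geo L c) * (Polynomial.X ^ c - 1) = Polynomial.X ^ L - 1 := by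
  have h : geo L c = ∑ i ∈ Finset.range (L / c), (Polynomial.X ^ c) ^ i := by
    unfold geo; congr 1; ext i; rw [← pow_mul]
  rw [h, geom_sum_mul, ← pow_mul, Nat.mul_div_cancel' hc]

lemma geo_series_mul (L c : ℕ) (hc : c ∣ L) :
    (geo L c : PowerSeries ℚ) * (1 - PowerSeries.X ^ c) = 1 - PowerSeries.X ^ L := by
  have h := congrArg (Polynomial.coeToPowerSeries.ringHom (R := ℚ)) (geo_mul L c hc)
  simp only [map_mul, map_sub, map_pow, map_one] at h
  have hx : Polynomial.coeToPowerSeries.ringHom (R := ℚ) Polynomial.X = PowerSeries.X := by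
    exact Polynomial.coe_X
  rw [hx] at h
  have : (geo L c : PowerSeries ℚ) = Polynomial.coeToPowerSeries.ringHom (R := ℚ) (geo L c) := rfl
  rw [this]
  linear_combination -h

lemma natDegree_geo_le (L c : ℕ) : (geo L c).natDegree ≤ L := by
  unfold geo
  apply Polynomial.natDegree_sum_le_of_forall_le
  intro i hi
  rw [Polynomial.natDegree_X_pow]
  rcases Nat.eq_zero_or_pos c with rfl | hc
  · simp
  · have : i < L / c := Finset.mem_range.mp hi
    calc c * i ≤ c * (L / c) := Nat.mul_le_mul_left c (by omega)
      _ ≤ L := Nat.mul_div_le L c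

lemma geo_eval_one (L c : ℕ) : (geo L c).eval 1 = (L / c : ℕ) := by
  unfold geo
  simp [Polynomial.eval_finset_sum]
lemma key_identity (C : Multiset ℕ) (hpos : ∀ c ∈ C, 0 < c) (L : ℕ)
    (hdvd : ∀ c ∈ C, c ∣ L) (hL : 0 < L) (hk : 1 ≤ Multiset.card C) :
    (C.map fun c => PowerSeries.mk fun m => if c ∣ m then (1 : ℚ) else 0).prod
      = ((C.map (geo L)).prod : Polynomial ℚ) * U L (Multiset.card C - 1) := by
  set k := Multiset.card C with hkdef
  have hSD : (C.map fun c => PowerSeries.mk fun m => if c ∣ m then (1 : ℚ) else 0).prod *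
      (C.map fun c => 1 - PowerSeries.X ^ c).prod = 1 := by
    rw [← Multiset.prod_map_mul]
    rw [Multiset.map_congr rfl (fun c hc => invA c (hpos c hc))]
    simp
  have hQD : ((C.map (geo L)).prod : PowerSeries ℚ) *
      (C.map fun c => 1 - PowerSeries.X ^ c).prod = (1 - PowerSeries.X ^ L) ^ k := by
    have h1 : ((C.map (geo L)).prod : PowerSeries ℚ)
        = (C.map fun c => ((geo L c : PowerSeries ℚ))).prod := by
      rw [show ((C.map (geo L)).prod : PowerSeries ℚ)
          = Polynomial.coeToPowerSeries.ringHom (R := ℚ) (C.map (geo L)).prod from rfl,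
        map_multiset_prod, Multiset.map_map]
      rfl
    rw [h1, ← Multiset.prod_map_mul]
    rw [Multiset.map_congr rfl (fun c hc => geo_series_mul L c (hdvd c hc))]
    simp [hkdef]
  have hU := U_inv L hL (k - 1)
  rw [show k - 1 + 1 = k from by omega] at hU
  calc (C.map fun c => PowerSeries.mk fun m => if c ∣ m then (1 : ℚ) else 0).prod
      = (C.map fun c => PowerSeries.mk fun m => if c ∣ m then (1 : ℚ) else 0).prod *
        (U L (k-1) * (1 - PowerSeries.X ^ L) ^ k) := by rw [hU, mul_one]
    _ = (C.map fun c => PowerSeries.mk fun m => if c ∣ m then (1 : ℚ) else 0).prod *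
        (U L (k-1) * (((C.map (geo L)).prod : PowerSeries ℚ) *
          (C.map fun c => 1 - PowerSeries.X ^ c).prod)) := by rw [hQD]
    _ = ((C.map fun c => PowerSeries.mk fun m => if c ∣ m then (1 : ℚ) else 0).prod *
        (C.map fun c => 1 - PowerSeries.X ^ c).prod) *
          (((C.map (geo L)).prod : PowerSeries ℚ) * U L (k-1)) := by ring
    _ = ((C.map (geo L)).prod : PowerSeries ℚ) * U L (k-1) := by rw [hSD, one_mul]
section Equi
open AddMonoidAlgebra

variable {L : ℕ} [NeZero L]

lemma int_smul_mem (S : AddSubmonoid (ZMod L)) {x : ZMod L} (hx : x ∈ S) (z : ℤ) :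
    z • x ∈ S := by
  have hLx : (L : ℤ) • x = 0 := by
    rw [natCast_zsmul, nsmul_eq_mul, ZMod.natCast_self, zero_mul]
  have h1 : z • x = ((z % L).toNat) • x := by
    have hz : z = (L : ℤ) * (z / L) + z % L := (Int.mul_ediv_add_emod z L).symm
    calc z • x = ((L : ℤ) * (z / L) + z % L) • x := by rw [← hz]
      _ = (z / L) • ((L:ℤ) • x) + (z % L) • x := by
          rw [add_smul, mul_comm, mul_smul]
      _ = (z % L) • x := by rw [hLx, smul_zero, zero_add]
      _ = ((z % L).toNat : ℤ) • x := by
          rw [Int.toNat_of_nonneg (Int.emod_nonneg z (by exact_mod_cast (NeZero.ne L)))]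
      _ = ((z % L).toNat) • x := natCast_zsmul x _
  rw [h1]
  exact AddSubmonoid.nsmul_mem S hx _

lemma gcd_mem (C : Multiset ℕ) (S : AddSubmonoid (ZMod L))
    (h : ∀ c ∈ C, ((c : ℕ) : ZMod L) ∈ S) : ((C.gcd : ℕ) : ZMod L) ∈ S := by
  induction C using Multiset.induction with
  | empty =>
    rw [Multiset.gcd_zero]
    exact (by simpa using S.zero_mem : ((0 : ℕ) : ZMod L) ∈ S)
  | cons a s ih =>
    rw [Multiset.gcd_cons]
    show ((Nat.gcd a s.gcd : ℕ) : ZMod L) ∈ S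
    have ha : ((a : ℕ) : ZMod L) ∈ S := h a (Multiset.mem_cons_self a s)
    have hs : ((s.gcd : ℕ) : ZMod L) ∈ S := ih (fun c hc => h c (Multiset.mem_cons_of_mem hc))
    have hb := Nat.gcd_eq_gcd_ab a s.gcd
    have hcast : ((Nat.gcd a s.gcd : ℕ) : ZMod L)
        = (Nat.gcdA a s.gcd) • ((a : ℕ) : ZMod L) + (Nat.gcdB a s.gcd) • ((s.gcd : ℕ) : ZMod L) := by
      have := congrArg (fun z : ℤ => (z : ZMod L)) hb
      push_cast at this
      rw [this]
      simp [zsmul_eq_mul]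
      ring
    rw [hcast]
    exact AddSubmonoid.add_mem S (int_smul_mem S ha _) (int_smul_mem S hs _)

noncomputable def pr : Polynomial ℚ →ₐ[ℚ] AddMonoidAlgebra ℚ (ZMod L) :=
  Polynomial.aeval (AddMonoidAlgebra.single (1 : ZMod L) (1:ℚ))

lemma pr_X_pow (j : ℕ) :
    (pr (L := L)) (Polynomial.X ^ j) = AddMonoidAlgebra.single ((j : ℕ) : ZMod L) (1:ℚ) := by
  rw [pr, map_pow, Polynomial.aeval_X, AddMonoidAlgebra.single_pow, one_pow, nsmul_eq_mul, mul_one]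

lemma pr_apply (P : Polynomial ℚ) (N : ℕ) (hN : P.natDegree < N) (r : ZMod L) :
    ((pr (L := L)) P).coeff r = ∑ j ∈ Finset.range N, if ((j : ℕ) : ZMod L) = r then P.coeff j else 0 := by
  conv_lhs => rw [Polynomial.as_sum_range' P N hN]
  rw [map_sum]
  have h1 : ∀ j, (pr (L := L)) ((Polynomial.monomial j) (P.coeff j))
      = AddMonoidAlgebra.single ((j : ℕ) : ZMod L) (P.coeff j) := by
    intro j
    rw [← Polynomial.C_mul_X_pow_eq_monomial, map_mul, pr_X_pow, pr, Polynomial.aeval_C]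
    have : (algebraMap ℚ (AddMonoidAlgebra ℚ (ZMod L))) (P.coeff j)
        = AddMonoidAlgebra.single (0 : ZMod L) (P.coeff j) := rfl
    rw [this, AddMonoidAlgebra.single_mul_single, zero_add, mul_one]
  simp only [h1]
  rw [AddMonoidAlgebra.coeff_sum, Finset.sum_apply']
  exact Finset.sum_congr rfl (fun j _ => by rw [AddMonoidAlgebra.coeff_single, Finsupp.single_apply])

lemma pr_sum_eq_eval_one (P : Polynomial ℚ) :
    ∑ r : ZMod L, ((pr (L := L)) P).coeff r = P.eval 1 := by
  classical
  let F : Multiplicative (ZMod L) →* ℚ := 1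
  let aug := AddMonoidAlgebra.lift ℚ ℚ (ZMod L) F
  have h1 : aug ((pr (L := L)) P) = P.eval 1 := by
    have h2 : aug ((pr (L := L)) P) = Polynomial.aeval (aug (AddMonoidAlgebra.single (1 : ZMod L) (1:ℚ))) P := by
      rw [pr]
      exact (Polynomial.aeval_algHom_apply aug _ P).symm
    rw [h2]
    have h3 : aug (AddMonoidAlgebra.single (1 : ZMod L) (1:ℚ)) = 1 := by
      simp [aug, AddMonoidAlgebra.lift_single, F]
    rw [h3]
    rw [show ((Polynomial.aeval (1:ℚ)) P) = Polynomial.eval 1 P from by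
      rw [Polynomial.coe_aeval_eq_eval]]
  rw [← h1]
  rw [AddMonoidAlgebra.lift_apply]
  rw [Finsupp.sum_fintype]
  · exact Finset.sum_congr rfl (fun r _ => by simp [F])
  · intro a; simp
lemma pr_geo (L c : ℕ) [NeZero L] :
    (pr (L := L)) (geo L c) = ∑ i ∈ Finset.range (L / c),
      AddMonoidAlgebra.single (((c * i : ℕ) : ZMod L)) (1:ℚ) := by
  unfold geo
  rw [map_sum]
  simp only [pr_X_pow]

lemma shift_geo (L c : ℕ) [NeZero L] (hc : c ∣ L) (hc0 : 0 < c) (hL : 0 < L) :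
    AddMonoidAlgebra.single (((c : ℕ)) : ZMod L) (1:ℚ) * (pr (L := L)) (geo L c)
      = (pr (L := L)) (geo L c) := by
  rw [pr_geo, Finset.mul_sum]
  have hstep : ∀ i : ℕ, AddMonoidAlgebra.single (((c : ℕ)) : ZMod L) (1:ℚ) *
      AddMonoidAlgebra.single (((c * i : ℕ) : ZMod L)) (1:ℚ)
      = AddMonoidAlgebra.single (((c * (i+1) : ℕ) : ZMod L)) (1:ℚ) := by
    intro i
    rw [AddMonoidAlgebra.single_mul_single, mul_one]
    congr 1
    push_cast
    ring
  simp only [hstep]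
  set f : ℕ → AddMonoidAlgebra ℚ (ZMod L) :=
    fun i => AddMonoidAlgebra.single (((c * i : ℕ) : ZMod L)) (1:ℚ) with hf
  have hper : f (L / c) = f 0 := by
    rw [hf]
    simp only
    congr 1
    rw [Nat.mul_div_cancel' hc]
    simp [ZMod.natCast_self]
  have h3 := (Finset.sum_range_succ f (L / c)).symm.trans (Finset.sum_range_succ' f (L / c))
  linear_combination hper - h3

lemma const_of_shift {L : ℕ} [NeZero L] (x : AddMonoidAlgebra ℚ (ZMod L))
    (h : ∀ t : ZMod L, AddMonoidAlgebra.single t (1:ℚ) * x = x) (r : ZMod L) : x.coeff r = x.coeff 0 := by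
  have h1 : x.coeff r = (AddMonoidAlgebra.single r (1:ℚ) * x).coeff r := by rw [h r]
  rw [h1, AddMonoidAlgebra.coeff_single_mul_apply, neg_add_cancel, one_mul]

lemma equi (C : Multiset ℕ) (L : ℕ) [NeZero L] (hpos : ∀ c ∈ C, 0 < c)
    (hdvd : ∀ c ∈ C, c ∣ L) (hgcd : C.gcd = 1) (r : ZMod L) :
    ((pr (L := L)) ((C.map (geo L)).prod)).coeff r = ((C.map (geo L)).prod).eval 1 / L := by
  have hL : 0 < L := Nat.pos_of_ne_zero (NeZero.ne L)
  set Q := (C.map (geo L)).prod with hQ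
  set x := (pr (L := L)) Q with hx
  let S : AddSubmonoid (ZMod L) :=
    { carrier := {t | AddMonoidAlgebra.single t (1:ℚ) * x = x}
      zero_mem' := by
        show AddMonoidAlgebra.single (0 : ZMod L) (1:ℚ) * x = x
        rw [← AddMonoidAlgebra.one_def, one_mul]
      add_mem' := by
        intro a b ha hb
        show AddMonoidAlgebra.single (a + b) (1:ℚ) * x = x
        rw [show AddMonoidAlgebra.single (a + b) (1:ℚ)
            = AddMonoidAlgebra.single a (1:ℚ) * AddMonoidAlgebra.single b (1:ℚ) from by
          rw [AddMonoidAlgebra.single_mul_single, mul_one], mul_assoc]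
        rw [show AddMonoidAlgebra.single b (1:ℚ) * x = x from hb, show
          AddMonoidAlgebra.single a (1:ℚ) * x = x from ha] }
  have gen : ∀ c ∈ C, ((c : ℕ) : ZMod L) ∈ S := by
    intro c hc
    obtain ⟨C', rfl⟩ := Multiset.exists_cons_of_mem hc
    show AddMonoidAlgebra.single (((c:ℕ)) : ZMod L) (1:ℚ) * x = x
    have hsplit : x = (pr (L := L)) (geo L c) * (pr (L := L)) ((C'.map (geo L)).prod) := by
      rw [hx, hQ, Multiset.map_cons, Multiset.prod_cons, map_mul]
    rw [hsplit, ← mul_assoc,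
      shift_geo L c (hdvd c (Multiset.mem_cons_self c C')) (hpos c (Multiset.mem_cons_self c C')) hL]
  have onemem : (1 : ZMod L) ∈ S := by
    have := gcd_mem C S gen
    rw [hgcd] at this
    simpa using this
  have allmem : ∀ t : ZMod L, t ∈ S := by
    intro t
    have h1 := AddSubmonoid.nsmul_mem S onemem t.val
    rwa [nsmul_eq_mul, mul_one, ZMod.natCast_val, ZMod.cast_id] at h1
  have hconst : ∀ s : ZMod L, x.coeff s = x.coeff 0 := const_of_shift x (fun t => allmem t) 
  have hsum : ∑ s : ZMod L, x.coeff s = Q.eval 1 := pr_sum_eq_eval_one Q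
  have hcard : (Finset.univ : Finset (ZMod L)).card = L := by
    rw [Finset.card_univ, ZMod.card]
  have hsum2 : ∑ s : ZMod L, x.coeff s = (L : ℚ) * x.coeff 0 := by
    rw [Finset.sum_congr rfl (fun s _ => hconst s), Finset.sum_const, hcard, nsmul_eq_mul]
  have hL0 : (L : ℚ) ≠ 0 := Nat.cast_ne_zero.mpr (NeZero.ne L)
  rw [hconst r]
  field_simp
  rw [← hsum, hsum2]
  ring

end Equi
section Analysis

lemma abs_prod_le (p : ℕ) (b : ℕ → ℚ) (M : ℚ) (hb : ∀ i < p, |b i| ≤ M) :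
    |∏ i ∈ Finset.range p, b i| ≤ M ^ p := by
  rw [Finset.abs_prod]
  calc ∏ i ∈ Finset.range p, |b i| ≤ ∏ i ∈ Finset.range p, M := by
        apply Finset.prod_le_prod
        · intro i _; exact abs_nonneg _
        · intro i hi; exact hb i (Finset.mem_range.mp hi)
    _ = M ^ p := by rw [Finset.prod_const, Finset.card_range]

lemma prod_diff_bound (p : ℕ) (a b : ℕ → ℚ) (δ M : ℚ) (hδ : 0 ≤ δ) (hM : 0 ≤ M)
    (hab : ∀ i < p, |a i - b i| ≤ δ) (ha : ∀ i < p, |a i| ≤ M) (hb : ∀ i < p, |b i| ≤ M) :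
    |∏ i ∈ Finset.range p, a i - ∏ i ∈ Finset.range p, b i| ≤ p * δ * M ^ (p - 1) := by
  induction p with
  | zero => simp
  | succ p ih =>
    have ih' := ih (fun i hi => hab i (by omega)) (fun i hi => ha i (by omega))
      (fun i hi => hb i (by omega))
    rw [Finset.prod_range_succ, Finset.prod_range_succ]
    have key : (∏ i ∈ Finset.range p, a i) * a p - (∏ i ∈ Finset.range p, b i) * b p
        = a p * (∏ i ∈ Finset.range p, a i - ∏ i ∈ Finset.range p, b i)
          + (a p - b p) * ∏ i ∈ Finset.range p, b i := by ring
    rw [key]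
    calc |a p * (∏ i ∈ Finset.range p, a i - ∏ i ∈ Finset.range p, b i)
          + (a p - b p) * ∏ i ∈ Finset.range p, b i|
        ≤ |a p| * |∏ i ∈ Finset.range p, a i - ∏ i ∈ Finset.range p, b i|
          + |a p - b p| * |∏ i ∈ Finset.range p, b i| := by
          calc _ ≤ |a p * (∏ i ∈ Finset.range p, a i - ∏ i ∈ Finset.range p, b i)|
              + |(a p - b p) * ∏ i ∈ Finset.range p, b i| := abs_add_le _ _
            _ = _ := by rw [abs_mul, abs_mul]
      _ ≤ M * (p * δ * M ^ (p - 1)) + δ * M ^ p := by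
          apply add_le_add
          · exact mul_le_mul (ha p (by omega)) ih' (abs_nonneg _)
              (le_trans (abs_nonneg _) (ha p (by omega)))
          · exact mul_le_mul (hab p (by omega)) (abs_prod_le p b M (fun i hi => hb i (by omega)))
              (abs_nonneg _) hδ
      _ ≤ (p + 1 : ℕ) * δ * M ^ ((p + 1) - 1) := by
          have h2 : ((p + 1) : ℕ) - 1 = p := by omega
          rw [h2]
          rcases Nat.eq_zero_or_pos p with rfl | hp
          · simp
          · have h1 : M * M ^ (p - 1) = M ^ p := by
              rw [← pow_succ']
              congr 1
              omega
            push_cast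
            apply le_of_eq
            calc M * (p * δ * M ^ (p - 1)) + δ * M ^ p
                = (p : ℚ) * δ * (M * M ^ (p-1)) + δ * M ^ p := by ring
              _ = (p : ℚ) * δ * M ^ p + δ * M ^ p := by rw [h1]
              _ = ((p : ℚ) + 1) * δ * M ^ p := by ring

lemma choose_cast_eq (m k1 : ℕ) :
    (Nat.choose (m + k1) k1 : ℚ) * (Nat.factorial k1 : ℚ)
      = ∏ i ∈ Finset.range k1, ((m : ℚ) + i + 1) := by
  induction k1 with
  | zero => simp
  | succ k1 ih =>
    have hn := Nat.add_one_mul_choose_eq (m + k1) k1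
    have hn2 : ((m + k1 + 1) : ℚ) * ((m + k1).choose k1 : ℚ)
        = ((m + k1 + 1).choose (k1+1) : ℚ) * (k1 + 1) := by exact_mod_cast congrArg (Nat.cast (R := ℚ)) hn
    rw [Finset.prod_range_succ, ← ih]
    have e1 : m + (k1 + 1) = (m + k1) + 1 := by ring
    rw [e1, Nat.factorial_succ]
    push_cast
    nlinarith [hn2]

end Analysis
section Qfacts

lemma coeff_nonneg_prod (ms : Multiset (Polynomial ℚ))
    (h : ∀ P ∈ ms, ∀ j, 0 ≤ P.coeff j) : ∀ j, 0 ≤ ms.prod.coeff j := by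
  induction ms using Multiset.induction with
  | empty =>
    intro j
    rw [Multiset.prod_zero, Polynomial.coeff_one]
    positivity
  | cons a s ih =>
    intro j
    rw [Multiset.prod_cons, Polynomial.coeff_mul]
    apply Finset.sum_nonneg
    intro p _
    exact mul_nonneg (h a (Multiset.mem_cons_self a s) p.1)
      (ih (fun P hP => h P (Multiset.mem_cons_of_mem hP)) p.2)

lemma geo_coeff_nonneg (L c : ℕ) : ∀ j, 0 ≤ (geo L c).coeff j := by
  intro j
  unfold geo
  rw [Polynomial.finset_sum_coeff]
  apply Finset.sum_nonneg
  intro i _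
  rw [Polynomial.coeff_X_pow]
  positivity

lemma Q_natDegree_le (C : Multiset ℕ) (L : ℕ) :
    ((C.map (geo L)).prod).natDegree ≤ Multiset.card C * L := by
  calc ((C.map (geo L)).prod).natDegree ≤ ((C.map (geo L)).map Polynomial.natDegree).sum :=
        Polynomial.natDegree_multiset_prod_le _
    _ ≤ _ := by
      rw [Multiset.map_map]
      calc (C.map fun c => (geo L c).natDegree).sum ≤ (C.map fun _ => L).sum := by
            apply Multiset.sum_map_le_sum_map
            intro c _
            exact natDegree_geo_le L c
        _ = Multiset.card C * L := by
          rw [Multiset.map_const', Multiset.sum_replicate, smul_eq_mul]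

lemma Q_eval_one (C : Multiset ℕ) (L : ℕ) (hpos : ∀ c ∈ C, 0 < c) (hdvd : ∀ c ∈ C, c ∣ L) :
    (((C.map (geo L)).prod).eval 1 : ℚ)
      = (L : ℚ) ^ (Multiset.card C) * (C.map fun c => (1 : ℚ) / c).prod := by
  rw [Polynomial.eval_multiset_prod, Multiset.map_map]
  have h1 : ∀ c ∈ C, (Polynomial.eval 1 ∘ geo L) c = (L : ℚ) * ((1 : ℚ) / c) := by
    intro c hc
    have := geo_eval_one L c
    simp only [Function.comp_apply, this]
    rw [Nat.cast_div (hdvd c hc) (by exact_mod_cast (hpos c hc).ne')]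
    ring
  rw [Multiset.map_congr rfl h1, Multiset.prod_map_mul, Multiset.map_const',
    Multiset.prod_replicate]
  congr 1
  simp [Multiset.map_map]

end Qfacts
lemma term_est (L k1 : ℕ) (hL : 0 < L) (hk1 : 1 ≤ k1) (n j : ℕ) (hjn : j ≤ n)
    (hdvd : L ∣ n - j) :
    |(Nat.choose ((n - j) / L + k1) k1 : ℚ) - ((n : ℚ) / L) ^ k1 / (Nat.factorial k1 : ℚ)|
      ≤ (k1 : ℚ) * ((k1 : ℚ) + j + 1) ^ k1 * ((n : ℚ) + 1) ^ (k1 - 1) := by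
  set m := (n - j) / L with hm
  have hLQ : (0 : ℚ) < L := by exact_mod_cast hL
  have hmval : (m : ℚ) = ((n : ℚ) - j) / L := by
    have h1 : L * m = n - j := Nat.mul_div_cancel' hdvd
    have h2 : (L : ℚ) * m = (n : ℚ) - j := by
      rw [show ((n : ℚ) - j) = ((n - j : ℕ) : ℚ) from by
        rw [Nat.cast_sub hjn], ← h1]
      push_cast
      ring
    rw [eq_div_iff hLQ.ne']
    linear_combination h2
  set δ : ℚ := (k1 : ℚ) + j + 1 with hδdef
  set M : ℚ := (n : ℚ) + δ with hMdef
  have hδ1 : (1 : ℚ) ≤ δ := by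
    have : (0:ℚ) ≤ (k1:ℚ) := Nat.cast_nonneg k1
    have : (0:ℚ) ≤ (j:ℚ) := Nat.cast_nonneg j
    rw [hδdef]; linarith
  have hδ0 : (0 : ℚ) ≤ δ := by linarith
  have hM0 : (0 : ℚ) ≤ M := by
    have : (0:ℚ) ≤ (n:ℚ) := Nat.cast_nonneg n
    rw [hMdef]; linarith
  have hjL : (j : ℚ) / L ≤ j := by
    rw [div_le_iff₀ hLQ]
    have : (1:ℚ) ≤ L := by exact_mod_cast hL
    nlinarith [Nat.cast_nonneg (α := ℚ) j]
  have hmn : (m : ℚ) ≤ n := by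
    rw [hmval]
    rw [div_le_iff₀ hLQ]
    have h1 : (1:ℚ) ≤ L := by exact_mod_cast hL
    have h2 : (0:ℚ) ≤ (j:ℚ) := Nat.cast_nonneg j
    have h3 : (0:ℚ) ≤ (n:ℚ) := Nat.cast_nonneg n
    nlinarith
  have hm0 : (0:ℚ) ≤ (m:ℚ) := Nat.cast_nonneg m
  have hnL : (0:ℚ) ≤ (n:ℚ)/L := div_nonneg (Nat.cast_nonneg n) (le_of_lt hLQ)
  have hb : ∀ i < k1, |((n:ℚ)/L)| ≤ M := by
    intro i _
    rw [abs_of_nonneg hnL, hMdef]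
    have h1 : (n:ℚ)/L ≤ n := by
      rw [div_le_iff₀ hLQ]
      have : (1:ℚ) ≤ L := by exact_mod_cast hL
      nlinarith [Nat.cast_nonneg (α := ℚ) n]
    linarith
  have key := prod_diff_bound k1 (fun i => (m : ℚ) + i + 1) (fun _ => (n:ℚ)/L) δ M hδ0 hM0
    (by
      intro i hi
      have h1 : (m:ℚ) + i + 1 - (n:ℚ)/L = (i:ℚ) + 1 - (j:ℚ)/L := by
        rw [hmval]
        field_simp
        ring
      rw [h1, hδdef]
      rw [abs_le]
      constructor
      · have h2 : (0:ℚ) ≤ (i:ℚ) := Nat.cast_nonneg i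
        have h3 : (0:ℚ) ≤ (k1:ℚ) := Nat.cast_nonneg k1
        have h4 : (0:ℚ) ≤ (j:ℚ)/L := div_nonneg (Nat.cast_nonneg j) (le_of_lt hLQ)
        linarith [hjL]
      · have h2 : (i:ℚ) ≤ (k1:ℚ) := by exact_mod_cast le_of_lt hi
        have h4 : (0:ℚ) ≤ (j:ℚ)/L := div_nonneg (Nat.cast_nonneg j) (le_of_lt hLQ)
        linarith)
    (by
      intro i hi
      have h2 : (i:ℚ) + 1 ≤ (k1:ℚ) := by exact_mod_cast Nat.succ_le_of_lt hi
      rw [abs_of_nonneg (by positivity), hMdef, hδdef]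
      have h3 : (0:ℚ) ≤ (j:ℚ) := Nat.cast_nonneg j
      show (m:ℚ) + i + 1 ≤ (n:ℚ) + ((k1:ℚ) + j + 1)
      linarith [hmn])
    hb
  have hprodb : ∏ i ∈ Finset.range k1, ((fun _ => (n:ℚ)/L) i) = ((n:ℚ)/L)^k1 := by
    rw [Finset.prod_const, Finset.card_range]
  rw [hprodb] at key
  have hcc := choose_cast_eq m k1
  have hfac : (0:ℚ) < (Nat.factorial k1 : ℚ) := by exact_mod_cast Nat.factorial_pos k1
  have hfac1 : (1:ℚ) ≤ (Nat.factorial k1 : ℚ) := by exact_mod_cast Nat.one_le_iff_ne_zero.mpr (Nat.factorial_ne_zero k1)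
  have hchoose : (Nat.choose (m + k1) k1 : ℚ)
      = (∏ i ∈ Finset.range k1, ((m:ℚ) + i + 1)) / (Nat.factorial k1 : ℚ) := by
    rw [eq_div_iff hfac.ne']
    exact hcc
  calc |(Nat.choose (m + k1) k1 : ℚ) - ((n : ℚ) / L) ^ k1 / (Nat.factorial k1 : ℚ)|
      = |(∏ i ∈ Finset.range k1, ((m:ℚ) + i + 1)) - ((n:ℚ)/L)^k1| / (Nat.factorial k1 : ℚ) := by
        rw [hchoose, div_sub_div_same, abs_div, abs_of_pos hfac]
    _ ≤ |(∏ i ∈ Finset.range k1, ((m:ℚ) + i + 1)) - ((n:ℚ)/L)^k1| := by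
        rw [div_le_iff₀ hfac]
        nlinarith [abs_nonneg ((∏ i ∈ Finset.range k1, ((m:ℚ) + i + 1)) - ((n:ℚ)/L)^k1)]
    _ ≤ (k1:ℚ) * δ * M ^ (k1 - 1) := key
    _ ≤ (k1:ℚ) * δ * (δ * ((n:ℚ)+1)) ^ (k1 - 1) := by
        apply mul_le_mul_of_nonneg_left _ (by positivity)
        apply pow_le_pow_left₀ hM0
        rw [hMdef]
        have h1 : (0:ℚ) ≤ (n:ℚ) := Nat.cast_nonneg n
        nlinarith
    _ = (k1:ℚ) * (δ * δ ^ (k1-1)) * ((n:ℚ)+1) ^ (k1-1) := by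
        rw [mul_pow]; ring
    _ = (k1:ℚ) * δ ^ k1 * ((n:ℚ)+1) ^ (k1-1) := by
        have hδpow : δ * δ ^ (k1-1) = δ ^ k1 := by
          rw [← pow_succ']
          congr 1
          omega
        rw [hδpow]
/-- Let `C` be a finite multiset of positive integers with `gcd C = 1` and `|C| ≥ 2`.
The coefficient of `xⁿ` in `∏_{c∈C} 1/(1-x^c)` (where `1/(1-x^c)` is the power series
`Σ_{c ∣ m} x^m`) equals `(∏_{c∈C} 1/c)·n^{|C|-1}/(|C|-1)! + O(n^{|C|-2})`. -/
theorem stmt11 (C : Multiset ℕ) (hpos : ∀ c ∈ C, 0 < c) (hgcd : C.gcd = 1)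
    (hcard : 2 ≤ Multiset.card C) :
    ∃ K : ℚ, ∀ n : ℕ,
      |(PowerSeries.coeff n)
          ((C.map fun c => PowerSeries.mk fun m => if c ∣ m then (1 : ℚ) else 0).prod)
        - (C.map fun c => (1 : ℚ) / c).prod * (n : ℚ) ^ (Multiset.card C - 1)
            / (Nat.factorial (Multiset.card C - 1))|
      ≤ K * ((n : ℚ) + 1) ^ (Multiset.card C - 2) := by
  classical
  obtain ⟨k2, hk2⟩ : ∃ k2, Multiset.card C = k2 + 2 := ⟨Multiset.card C - 2, by omega⟩
  set k := Multiset.card C with hk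
  set k1 := k - 1 with hk1def
  have hk1 : k1 = k2 + 1 := by omega
  have hkk2 : k - 2 = k2 := by omega
  set L := C.lcm with hLdef
  have hL : 0 < L := by
    rcases Nat.eq_zero_or_pos L with h0 | h
    · exfalso
      have : (0 : ℕ) ∈ C := (Multiset.lcm_eq_zero_iff C).mp h0
      exact absurd (hpos 0 this) (lt_irrefl 0)
    · exact h
  haveI : NeZero L := ⟨hL.ne'⟩
  have hdvd : ∀ c ∈ C, c ∣ L := fun c hc => Multiset.dvd_lcm hc
  set Q := (C.map (geo L)).prod with hQdef
  have hQc : ∀ j, 0 ≤ Q.coeff j := by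
    apply coeff_nonneg_prod
    intro P hP
    obtain ⟨c, _, rfl⟩ := Multiset.mem_map.mp hP
    exact geo_coeff_nonneg L c
  have hkey := key_identity C hpos L hdvd hL (by omega)
  rw [show Multiset.card C - 1 = k1 from by omega] at hkey
  set N := k * L + 1 with hNdef
  have hdeg : Q.natDegree < N := by
    have hd := Q_natDegree_le C L
    rw [← hQdef, ← hk] at hd
    omega
  rw [← hQdef] at hkey
  clear_value k k1 L Q N
  set u : ℕ → ℚ := fun m => if L ∣ m then ((m / L + k1).choose k1 : ℚ) else 0 with hu
  set Kt : ℚ := (k1 : ℚ) * ((k1 : ℚ) + N + 1) ^ k1 + N with hKt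
  have hKt0 : 0 ≤ Kt := by
    rw [hKt]
    positivity
  refine ⟨(∑ j ∈ Finset.range N, Q.coeff j) * Kt, ?_⟩
  intro n
  set g : ℕ → ℚ := fun j => Q.coeff j * (if j ≤ n then u (n - j) else 0) with hg
  set hh : ℕ → ℚ := fun j =>
    if ((j : ℕ) : ZMod L) = ((n : ℕ) : ZMod L)
      then Q.coeff j * (((n : ℚ) / L) ^ k1 / (Nat.factorial k1 : ℚ)) else 0 with hhh
  -- Step 1: coefficient formula
  have h1 : (PowerSeries.coeff n)
      ((C.map fun c => PowerSeries.mk fun m => if c ∣ m then (1 : ℚ) else 0).prod)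
      = ∑ j ∈ Finset.range (n + 1), Q.coeff j * u (n - j) := by
    rw [hkey, PowerSeries.coeff_mul, Finset.Nat.sum_antidiagonal_eq_sum_range_succ_mk]
    apply Finset.sum_congr rfl
    intro j _
    rw [Polynomial.coeff_coe]
    congr 1
    simp only [U, PowerSeries.coeff_mk, hu]
  -- Step 2: extend to range N
  have h2 : (PowerSeries.coeff n)
      ((C.map fun c => PowerSeries.mk fun m => if c ∣ m then (1 : ℚ) else 0).prod)
      = ∑ j ∈ Finset.range N, g j := by
    rw [h1]
    have hA : ∑ j ∈ Finset.range (n + 1), Q.coeff j * u (n - j)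
        = ∑ j ∈ Finset.range (max (n + 1) N), g j := by
      rw [show ∑ j ∈ Finset.range (n + 1), Q.coeff j * u (n - j)
          = ∑ j ∈ Finset.range (n + 1), g j from Finset.sum_congr rfl
        (fun j hj => by
          have hjle : j ≤ n := by
            have := Finset.mem_range.mp hj
            omega
          rw [hg]
          simp only
          rw [if_pos hjle])]
      exact Finset.sum_subset (Finset.range_subset_range.mpr (le_max_left _ _))
          (fun j _ hj2 => by
            have : ¬ j ≤ n := fun hle => hj2 (Finset.mem_range.mpr (by omega))
            rw [hg]
            simp only
            rw [if_neg this, mul_zero])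
    have hB : ∑ j ∈ Finset.range N, g j = ∑ j ∈ Finset.range (max (n + 1) N), g j :=
      Finset.sum_subset (Finset.range_subset_range.mpr (le_max_right _ _))
        (fun j _ hj2 => by
          have hjN : N ≤ j := by
            by_contra hlt
            exact hj2 (Finset.mem_range.mpr (by omega))
          rw [hg]
          simp only
          rw [Polynomial.coeff_eq_zero_of_natDegree_lt (by omega), zero_mul])
    rw [hA, hB]
  -- Step 3: main term as a sum
  have hequi : ∑ j ∈ Finset.range N,
      (if ((j : ℕ) : ZMod L) = ((n : ℕ) : ZMod L) then Q.coeff j else 0)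
      = Q.eval 1 / L := by
    rw [← pr_apply Q N hdeg (((n : ℕ) : ZMod L)), hQdef]
    exact equi C L hpos hdvd hgcd _
  have h3 : (C.map fun c => (1 : ℚ) / c).prod * (n : ℚ) ^ k1 / (Nat.factorial k1 : ℚ)
      = ∑ j ∈ Finset.range N, hh j := by
    have hstep : ∑ j ∈ Finset.range N, hh j
        = (∑ j ∈ Finset.range N,
            (if ((j : ℕ) : ZMod L) = ((n : ℕ) : ZMod L) then Q.coeff j else 0))
          * (((n : ℚ) / L) ^ k1 / (Nat.factorial k1 : ℚ)) := by
      rw [Finset.sum_mul]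
      apply Finset.sum_congr rfl
      intro j _
      rw [hhh]
      simp only
      rw [ite_mul, zero_mul]
    rw [hstep, hequi, hQdef, Q_eval_one C L hpos hdvd]
    rw [show Multiset.card C = k from hk.symm]
    have hLpow : ((L : ℚ)) ^ k = (L : ℚ) * (L : ℚ) ^ k1 := by
      rw [← pow_succ']
      congr 1
      omega
    have hL0 : (L : ℚ) ≠ 0 := Nat.cast_ne_zero.mpr hL.ne'
    have hLk0 : (L : ℚ) ^ k1 ≠ 0 := pow_ne_zero _ hL0
    have hf0 : (Nat.factorial k1 : ℚ) ≠ 0 := Nat.cast_ne_zero.mpr (Nat.factorial_ne_zero k1)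
    have habs : ∀ P : ℚ, P * (n : ℚ) ^ k1 / (Nat.factorial k1 : ℚ)
        = ((L : ℚ)) ^ k * P / (L : ℚ) * (((n : ℚ) / L) ^ k1 / (Nat.factorial k1 : ℚ)) := by
      intro P
      rw [div_pow, hLpow]
      field_simp
    exact habs _
  -- Step 4: termwise bound
  have hterm : ∀ j ∈ Finset.range N, |g j - hh j| ≤ Q.coeff j * Kt * ((n : ℚ) + 1) ^ k2 := by
    intro j hj
    have hjN : j < N := Finset.mem_range.mp hj
    have hrhs0 : 0 ≤ Q.coeff j * Kt * ((n : ℚ) + 1) ^ k2 := by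
      apply mul_nonneg (mul_nonneg (hQc j) hKt0)
      positivity
    by_cases hc : ((j : ℕ) : ZMod L) = ((n : ℕ) : ZMod L)
    · by_cases hjn : j ≤ n
      · have hdvdnj : L ∣ n - j := by
          have hz : ((n - j : ℕ) : ZMod L) = 0 := by
            rw [Nat.cast_sub hjn, ← hc, sub_self]
          exact (ZMod.natCast_eq_zero_iff _ _).mp hz
        have hgj : g j = Q.coeff j * ((Nat.choose ((n - j) / L + k1) k1 : ℚ)) := by
          rw [hg]; simp only
          rw [if_pos hjn, hu]
          simp only
          rw [if_pos hdvdnj]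
        have hhj : hh j = Q.coeff j * (((n : ℚ) / L) ^ k1 / (Nat.factorial k1 : ℚ)) := by
          rw [hhh]; simp only
          rw [if_pos hc]
        rw [hgj, hhj, ← mul_sub, abs_mul, abs_of_nonneg (hQc j)]
        have hest := term_est L k1 hL (by omega) n j hjn hdvdnj
        have hjNq : ((j : ℚ)) ≤ N := by
          have : (j : ℚ) ≤ (N : ℚ) := by exact_mod_cast le_of_lt hjN
          exact this
        have hpow : ((k1 : ℚ) + j + 1) ^ k1 ≤ ((k1 : ℚ) + N + 1) ^ k1 := by
          apply pow_le_pow_left₀ (by positivity)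
          linarith
        have hk12 : k1 - 1 = k2 := by omega
        rw [hk12] at hest
        calc Q.coeff j * |(Nat.choose ((n - j) / L + k1) k1 : ℚ)
              - ((n : ℚ) / L) ^ k1 / (Nat.factorial k1 : ℚ)|
            ≤ Q.coeff j * ((k1 : ℚ) * ((k1 : ℚ) + j + 1) ^ k1 * ((n : ℚ) + 1) ^ k2) :=
              mul_le_mul_of_nonneg_left hest (hQc j)
          _ ≤ Q.coeff j * (Kt * ((n : ℚ) + 1) ^ k2) := by
              apply mul_le_mul_of_nonneg_left _ (hQc j)
              apply mul_le_mul_of_nonneg_right _ (by positivity)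
              rw [hKt]
              have hN0 : (0 : ℚ) ≤ (N : ℚ) := Nat.cast_nonneg N
              nlinarith [mul_le_mul_of_nonneg_left hpow (Nat.cast_nonneg (α := ℚ) k1)]
          _ = Q.coeff j * Kt * ((n : ℚ) + 1) ^ k2 := by ring
      · have hgj : g j = 0 := by
          rw [hg]; simp only
          rw [if_neg hjn, mul_zero]
        have hhj : hh j = Q.coeff j * (((n : ℚ) / L) ^ k1 / (Nat.factorial k1 : ℚ)) := by
          rw [hhh]; simp only
          rw [if_pos hc]
        rw [hgj, hhj, zero_sub, abs_neg, abs_mul, abs_of_nonneg (hQc j)]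
        have hnN : ((n : ℚ)) ≤ N := by
          have : n < N := by omega
          exact_mod_cast le_of_lt this
        have hLQ : (0 : ℚ) < L := by exact_mod_cast hL
        have hn0 : (0 : ℚ) ≤ (n : ℚ) := Nat.cast_nonneg n
        have hd1 : (n : ℚ) / L ≤ n := by
          rw [div_le_iff₀ hLQ]
          have : (1 : ℚ) ≤ L := by exact_mod_cast hL
          nlinarith
        have hd0 : (0 : ℚ) ≤ (n : ℚ) / L := div_nonneg hn0 (le_of_lt hLQ)
        have hfac1 : (1 : ℚ) ≤ (Nat.factorial k1 : ℚ) := by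
          exact_mod_cast Nat.one_le_iff_ne_zero.mpr (Nat.factorial_ne_zero k1)
        have habs : |((n : ℚ) / L) ^ k1 / (Nat.factorial k1 : ℚ)| ≤ Kt * ((n : ℚ) + 1) ^ k2 := by
          rw [abs_of_nonneg (by positivity)]
          have e1 : ((n : ℚ) / L) ^ k1 / (Nat.factorial k1 : ℚ) ≤ ((n : ℚ) / L) ^ k1 := by
            apply div_le_self (by positivity) hfac1
          have e2 : ((n : ℚ) / L) ^ k1 ≤ (n : ℚ) ^ k1 := pow_le_pow_left₀ hd0 hd1 k1
          have e3 : (n : ℚ) ^ k1 = (n : ℚ) * (n : ℚ) ^ k2 := by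
            rw [hk1, pow_succ']
          have e4 : (n : ℚ) ^ k2 ≤ ((n : ℚ) + 1) ^ k2 := by
            apply pow_le_pow_left₀ hn0
            linarith
          have e5 : (n : ℚ) * (n : ℚ) ^ k2 ≤ (N : ℚ) * ((n : ℚ) + 1) ^ k2 := by
            apply mul_le_mul hnN e4 (by positivity) (Nat.cast_nonneg N)
          have e6 : (N : ℚ) * ((n : ℚ) + 1) ^ k2 ≤ Kt * ((n : ℚ) + 1) ^ k2 := by
            apply mul_le_mul_of_nonneg_right _ (by positivity)
            rw [hKt]
            exact le_add_of_nonneg_left (by positivity)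
          calc ((n : ℚ) / L) ^ k1 / (Nat.factorial k1 : ℚ)
              ≤ ((n : ℚ) / L) ^ k1 := e1
            _ ≤ (n : ℚ) ^ k1 := e2
            _ = (n : ℚ) * (n : ℚ) ^ k2 := e3
            _ ≤ (N : ℚ) * ((n : ℚ) + 1) ^ k2 := e5
            _ ≤ Kt * ((n : ℚ) + 1) ^ k2 := e6
        calc Q.coeff j * |((n : ℚ) / L) ^ k1 / (Nat.factorial k1 : ℚ)|
            ≤ Q.coeff j * (Kt * ((n : ℚ) + 1) ^ k2) :=
              mul_le_mul_of_nonneg_left habs (hQc j)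
          _ = Q.coeff j * Kt * ((n : ℚ) + 1) ^ k2 := by ring
    · have hhj : hh j = 0 := by
        rw [hhh]; simp only
        rw [if_neg hc]
      have hgj : g j = 0 := by
        rw [hg]; simp only
        by_cases hjn : j ≤ n
        · rw [if_pos hjn, hu]
          simp only
          rw [if_neg, mul_zero]
          intro hdvdnj
          apply hc
          have hz : ((n - j : ℕ) : ZMod L) = 0 :=
            (ZMod.natCast_eq_zero_iff _ _).mpr hdvdnj
          rw [Nat.cast_sub hjn] at hz
          have := sub_eq_zero.mp hz
          exact this.symm
        · rw [if_neg hjn, mul_zero]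
      rw [hgj, hhj, sub_zero, abs_zero]
      exact hrhs0
  -- Step 5: conclude
  rw [hkk2, h2, h3]
  calc |∑ j ∈ Finset.range N, g j - ∑ j ∈ Finset.range N, hh j|
      = |∑ j ∈ Finset.range N, (g j - hh j)| := by rw [Finset.sum_sub_distrib]
    _ ≤ ∑ j ∈ Finset.range N, |g j - hh j| := Finset.abs_sum_le_sum_abs _ _
    _ ≤ ∑ j ∈ Finset.range N, Q.coeff j * Kt * ((n : ℚ) + 1) ^ k2 :=
        Finset.sum_le_sum hterm
    _ = (∑ j ∈ Finset.range N, Q.coeff j) * Kt * ((n : ℚ) + 1) ^ k2 := by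
        rw [Finset.sum_mul, Finset.sum_mul]
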